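/- For every tuple length ℓ ≥ 2, and every ℓ-tuple ā of atoms represented as a hereditarily finite set via the iterated Kuratowski pairing, there is an m-form φ_ā (depending only on the equality pattern of ā, for m ≥ ℓ) and an m-molecule σ such that ā = φ_ā * σ. -/

import Mathlib

open scoped Classical

/-- An abstract model of hereditarily finite sets over a set `A` of atoms,
together with the extension of permutations of atoms to all objects. -/
structure HFModel (A : Type) : Type 1 where
  Obj : Type
  atom : A → Obj
  mkSet : Finset Obj → Obj
  members : Obj → Finset Obj
  act : Equiv.Perm A → Obj → Obj
  atom_injective : Function.Injective atom
  atom_ne_mkSet : ∀ a s, atom a ≠ mkSet s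
  members_mkSet : ∀ s, members (mkSet s) = s
  members_atom : ∀ a, members (atom a) = ∅
  atom_or_set : ∀ x, (∃ a, x = atom a) ∨ (∃ s, x = mkSet s)
  act_atom : ∀ π a, act π (atom a) = atom (π a)
  act_mkSet : ∀ π s, act π (mkSet s) = mkSet (s.image (act π))
  act_one : ∀ x, act 1 x = x
  act_mul : ∀ π ρ x, act (π * ρ) x = act π (act ρ x)

/-- Abstract 2-configurations for `k`-molecules with colours in `κ`. -/
structure Config2 (k : ℕ) (κ : Type) : Type where
  rel : Fin k → Fin k → Bool
  col₁ : Fin k → κ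
  col₂ : Fin k → κ

/-- The configuration of a pair of `k`-molecules. -/
def conf {A κ : Type} [DecidableEq A] {k : ℕ} (col : A → κ) (τ σ : Fin k → A) :
    Config2 k κ :=
  ⟨fun p q => decide (τ p = σ q), col ∘ τ, col ∘ σ⟩

/-- `k`-forms. -/
inductive Form (k : ℕ) (κ : Type) : Type where
  | atom : Fin k → Form k κ
  | set : List (Form k κ × Config2 k κ) → Form k κ

/-- Evaluation `φ * σ` of a `k`-form on a `k`-molecule. -/
noncomputable def evalForm {A κ : Type} [DecidableEq A] [Fintype A] {k : ℕ}
    (M : HFModel A) (col : A → κ) : (Fin k → A) → Form k κ → M.Obj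
  | σ, .atom p => M.atom (σ p)
  | σ, .set l =>
      M.mkSet <| (l.attach.map (fun x =>
        (Finset.univ.filter
            (fun τ : Fin k → A => Function.Injective τ ∧ conf col τ σ = x.1.2)).image
          (fun τ => evalForm M col τ x.1.1))).foldr (· ∪ ·) ∅
  termination_by σ φ => sizeOf φ
  decreasing_by
    obtain ⟨⟨φ', E'⟩, hmem⟩ := x
    have h := List.sizeOf_lt_of_mem hmem
    simp at h ⊢
    omega

/-- The orbit `G x` of an object under a finite set of permutations, as an object. -/
noncomputable def orbitObj {A : Type} (M : HFModel A) (G : Finset (Equiv.Perm A))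
    (x : M.Obj) : M.Obj :=
  M.mkSet (G.image (fun g => M.act g x))

/-- The object `⋃_{h ∈ H} φ * (h ∘ σ)`. -/
noncomputable def unionEval {A κ : Type} [DecidableEq A] [Fintype A] {k : ℕ}
    (M : HFModel A) (col : A → κ) (H : Finset (Equiv.Perm A)) (φ : Form k κ)
    (σ : Fin k → A) : M.Obj :=
  M.mkSet (H.biUnion (fun h => M.members (evalForm M col (⇑h ∘ σ) φ)))

/-- The orbit-form evaluation `(φ,G,H) * σ = G(⋃_{h∈H} φ * hσ)`. -/
noncomputable def orbitEval {A κ : Type} [DecidableEq A] [Fintype A] {k : ℕ}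
    (M : HFModel A) (col : A → κ) (φ : Form k κ) (G H : Finset (Equiv.Perm A))
    (σ : Fin k → A) : M.Obj :=
  orbitObj M G (unionEval M col H φ σ)

/-- A finite set of permutations forming a subgroup. -/
def IsSubgroupF {A : Type} (G : Finset (Equiv.Perm A)) : Prop :=
  (1 : Equiv.Perm A) ∈ G ∧ (∀ g ∈ G, g⁻¹ ∈ G) ∧ ∀ g ∈ G, ∀ h ∈ G, g * h ∈ G

/-- Colour-preserving permutations (automorphisms). -/
def IsAut {A κ : Type} (col : A → κ) (π : Equiv.Perm A) : Prop :=
  ∀ a, col (π a) = col a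

/-- `X` is a support of object `x`. -/
def SupportsObj {A κ : Type} (M : HFModel A) (col : A → κ) (X : Set A) (x : M.Obj) : Prop :=
  ∀ π : Equiv.Perm A, IsAut col π → (∀ a ∈ X, π a = a) → M.act π x = x

/-- Transitive-closure membership. -/
inductive InTC {A : Type} (M : HFModel A) : M.Obj → M.Obj → Prop where
  | mem {x y} : x ∈ M.members y → InTC M x y
  | trans {x z y} : x ∈ M.members z → InTC M z y → InTC M x y

/-- `y` is a transitive set. -/
def TransitiveObj {A : Type} (M : HFModel A) (y : M.Obj) : Prop :=
  ∀ z ∈ M.members y, ∀ w ∈ M.members z, w ∈ M.members y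

/-- `x` is `k`-skew-symmetric. -/
def SkewSym {A κ : Type} (M : HFModel A) (col : A → κ) (k : ℕ) (x : M.Obj) : Prop :=
  ∃ (G : Finset (Equiv.Perm A)) (y : M.Obj), IsSubgroupF G ∧ x = orbitObj M G y ∧
    TransitiveObj M y ∧
    ∀ z, (z = y ∨ InTC M z y) →
      ∃ X : Finset A, X.card ≤ k ∧ SupportsObj M col X (orbitObj M G z)

/-- Kuratowski pair `(x,y) = {{x},{x,y}}`. -/
noncomputable def kpair {A : Type} (M : HFModel A) (x y : M.Obj) : M.Obj :=
  M.mkSet {M.mkSet {x}, M.mkSet {x, y}}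

/-- `ℓ`-tuples represented via iterated Kuratowski pairing. -/
noncomputable def tupleObj {A : Type} (M : HFModel A) :
    (ℓ : ℕ) → (Fin ℓ → M.Obj) → M.Obj
  | 0, _ => M.mkSet ∅
  | 1, f => f 0
  | (n + 2), f => kpair M (f 0) (tupleObj M (n + 1) (fun i => f i.succ))

section TupleRepAux

variable {A κ : Type} [DecidableEq A] [Fintype A]

lemma isAut_one' (col : A → κ) : IsAut col (1 : Equiv.Perm A) := fun _ => rfl

lemma isAut_mul' (col : A → κ) {π ρ : Equiv.Perm A} (hπ : IsAut col π) (hρ : IsAut col ρ) :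
    IsAut col (π * ρ) := fun a => by
  simp only [Equiv.Perm.mul_apply]; rw [hπ, hρ]

lemma isAut_swap' (col : A → κ) {x y : A} (h : col x = col y) :
    IsAut col (Equiv.swap x y) := by
  intro a
  rcases eq_or_ne a x with rfl | hx
  · simp [Equiv.swap_apply_left, h]
  rcases eq_or_ne a y with rfl | hy
  · simp [Equiv.swap_apply_right, h]
  · rw [Equiv.swap_apply_of_ne_of_ne hx hy]

/-- Any two pattern-and-colour-equal tuples are related by a colour-preserving
permutation of the atoms. -/
lemma exists_aut_perm (col : A → κ) :
    ∀ (s : ℕ) (x y : Fin s → A),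
      (∀ i j, x i = x j ↔ y i = y j) → (∀ i, col (x i) = col (y i)) →
      ∃ π : Equiv.Perm A, IsAut col π ∧ ∀ i, π (x i) = y i := by
  intro s
  induction s with
  | zero => exact fun x y _ _ => ⟨1, isAut_one' col, fun i => i.elim0⟩
  | succ s ih =>
    intro x y hpat hcol
    obtain ⟨π', hπ'aut, hπ'⟩ := ih (fun i => x i.succ) (fun i => y i.succ)
      (fun i j => hpat i.succ j.succ) (fun i => hcol i.succ)
    by_cases h : ∃ j : Fin s, x 0 = x j.succ
    · obtain ⟨j, hj⟩ := h
      refine ⟨π', hπ'aut, fun i => ?_⟩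
      refine Fin.cases ?_ (fun i => hπ' i) i
      rw [hj, hπ' j, ← (hpat 0 j.succ).mp hj]
    · push_neg at h
      refine ⟨Equiv.swap (y 0) (π' (x 0)) * π',
        isAut_mul' col (isAut_swap' col (by rw [hπ'aut, ← hcol 0])) hπ'aut, fun i => ?_⟩
      refine Fin.cases ?_ (fun i => ?_) i
      · simp [Equiv.Perm.mul_apply, Equiv.swap_apply_right]
      · have h1 : π' (x i.succ) = y i.succ := hπ' i
        have hne1 : y i.succ ≠ y 0 := fun he => (h i) ((hpat 0 i.succ).mpr he.symm)
        have hne2 : y i.succ ≠ π' (x 0) := fun he => h i (π'.injective (by rw [hπ' i, he])).symm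
        simp [Equiv.Perm.mul_apply, h1, Equiv.swap_apply_of_ne_of_ne hne1 hne2]

lemma conf_self_eq (col : A → κ) {k : ℕ} {σ σ' : Fin k → A}
    (hσ : Function.Injective σ) (hσ' : Function.Injective σ')
    (hc : col ∘ σ = col ∘ σ') : conf col σ σ = conf col σ' σ' := by
  simp only [conf, Config2.mk.injEq]
  refine ⟨?_, hc, hc⟩
  funext p q
  simp only [decide_eq_decide, hσ.eq_iff, hσ'.eq_iff]

lemma filter_conf (M : HFModel A) (col : A → κ) {k : ℕ} {σ : Fin k → A}
    (hσ : Function.Injective σ) :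
    (Finset.univ.filter
        (fun τ : Fin k → A => Function.Injective τ ∧ conf col τ σ = conf col σ σ)) = {σ} := by
  ext τ
  simp only [Finset.mem_filter, Finset.mem_univ, true_and, Finset.mem_singleton]
  constructor
  · rintro ⟨hinj, hconf⟩
    funext p
    have h1 := congrFun (congrFun (congrArg Config2.rel hconf) p) p
    simpa [conf] using h1
  · rintro rfl
    exact ⟨hσ, rfl⟩

lemma eval_set_one (M : HFModel A) (col : A → κ) {k : ℕ} {σ : Fin k → A}
    (hσ : Function.Injective σ) (φ : Form k κ) :
    evalForm M col σ (.set [(φ, conf col σ σ)]) = M.mkSet {evalForm M col σ φ} := by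
  rw [evalForm]
  simp [filter_conf M col hσ]

lemma eval_set_two (M : HFModel A) (col : A → κ) {k : ℕ} {σ : Fin k → A}
    (hσ : Function.Injective σ) (φ ψ : Form k κ) :
    evalForm M col σ (.set [(φ, conf col σ σ), (ψ, conf col σ σ)]) =
      M.mkSet {evalForm M col σ φ, evalForm M col σ ψ} := by
  rw [evalForm]
  simp [filter_conf M col hσ]

/-- The form representing an `ℓ`-tuple with representative indices `r`. -/
noncomputable def tupleFormAux {k : ℕ} {κ : Type} (E : Config2 k κ) :
    (ℓ : ℕ) → (Fin ℓ → Fin k) → Form k κ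
  | 0, _ => .set []
  | 1, r => .atom (r 0)
  | (n + 2), r =>
      .set [(.set [(.atom (r 0), E)], E),
            (.set [(.atom (r 0), E), (tupleFormAux E (n + 1) (fun i => r i.succ), E)], E)]

lemma eval_tupleForm (M : HFModel A) (col : A → κ) {k : ℕ} {σ : Fin k → A}
    (hσ : Function.Injective σ) :
    ∀ (ℓ : ℕ) (r : Fin ℓ → Fin k), 1 ≤ ℓ →
      evalForm M col σ (tupleFormAux (conf col σ σ) ℓ r)
        = tupleObj M ℓ (fun i => M.atom (σ (r i))) := by
  intro ℓ
  induction ℓ with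
  | zero => exact fun r h => absurd h (by omega)
  | succ s ih =>
    intro r _
    match s, ih with
    | 0, _ => rw [tupleFormAux, evalForm]; rfl
    | (t+1), ih =>
      have hrec := ih (fun i => r i.succ) (by omega)
      show evalForm M col σ (tupleFormAux (conf col σ σ) (t + 2) r) = _
      rw [tupleFormAux, eval_set_two M col hσ, eval_set_one M col hσ,
        eval_set_two M col hσ, hrec]
      have hat : evalForm M col σ (.atom (r 0)) = M.atom (σ (r 0)) := by rw [evalForm]
      rw [hat]
      rfl

end TupleRepAux

/-- Every tuple of atoms (as a hereditarily finite set via Kuratowski pairing) is of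
the form `φ * σ` for an `m`-form depending only on the equality/colour pattern of the
tuple, and an `m`-molecule. -/
theorem tuple_representation
    {A κ : Type} [DecidableEq A] [Fintype A]
    (M : HFModel A) (col : A → κ) (n m : ℕ)
    (hm : n + 2 ≤ m) (hA : m ≤ Fintype.card A)
    (a : Fin (n + 2) → A) :
    ∃ (φ : Form m κ) (σ : Fin m → A), Function.Injective σ ∧
      evalForm M col σ φ = tupleObj M (n + 2) (fun i => M.atom (a i)) ∧
      ∀ b : Fin (n + 2) → A,
        (∀ i j, a i = a j ↔ b i = b j) → (∀ i, col (a i) = col (b i)) →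
        ∃ σ' : Fin m → A, Function.Injective σ' ∧
          evalForm M col σ' φ = tupleObj M (n + 2) (fun i => M.atom (b i)) := by
  classical
  -- choose an injective `σ : Fin m → A` whose range contains the values of `a`
  set S : Finset A := Finset.univ.image a with hS
  have hScard : S.card ≤ m := le_trans (le_trans (Finset.card_image_le)
    (by simp)) hm
  obtain ⟨T, hST, hTu, hTc⟩ := Finset.exists_subsuperset_card_eq (Finset.subset_univ S)
    hScard (by simpa using hA)
  set σ : Fin m → A := fun j => ((T.equivFin.symm (Fin.cast hTc.symm j)) : A) with hσdef
  have hσ : Function.Injective σ := by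
    intro i j hij
    have h1 : T.equivFin.symm (Fin.cast hTc.symm i) = T.equivFin.symm (Fin.cast hTc.symm j) :=
      Subtype.coe_injective hij
    have h2 := T.equivFin.symm.injective h1
    have := congrArg Fin.val h2
    exact Fin.ext this
  have hmemT : ∀ i, a i ∈ T := fun i =>
    hST (Finset.mem_image_of_mem a (Finset.mem_univ i))
  set r : Fin (n + 2) → Fin m :=
    fun i => Fin.cast hTc (T.equivFin ⟨a i, hmemT i⟩) with hrdef
  have hσr : ∀ i, σ (r i) = a i := by
    intro i
    show ((T.equivFin.symm (Fin.cast hTc.symm (Fin.cast hTc (T.equivFin ⟨a i, hmemT i⟩)))) : A)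
      = a i
    have : Fin.cast hTc.symm (Fin.cast hTc (T.equivFin ⟨a i, hmemT i⟩))
        = T.equivFin ⟨a i, hmemT i⟩ := rfl
    rw [this, Equiv.symm_apply_apply]
  refine ⟨tupleFormAux (conf col σ σ) (n + 2) r, σ, hσ, ?_, ?_⟩
  · rw [eval_tupleForm M col hσ (n + 2) r (by omega)]
    congr 1
    funext i
    rw [hσr i]
  · intro b hpat hcol
    obtain ⟨π, hπaut, hπ⟩ := exists_aut_perm col (n + 2) a b hpat hcol
    refine ⟨⇑π ∘ σ, π.injective.comp hσ, ?_⟩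
    have hcc : col ∘ σ = col ∘ (⇑π ∘ σ) := by
      funext j; exact (hπaut (σ j)).symm
    rw [conf_self_eq col hσ (π.injective.comp hσ) hcc,
      eval_tupleForm M col (π.injective.comp hσ) (n + 2) r (by omega)]
    congr 1
    funext i
    show M.atom (π (σ (r i))) = M.atom (b i)
    rw [hσr i, hπ i]
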